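/- Phase equation (Euclidean version). Let Ω ⊆ ℝⁿ be open, ε > 0, and let u : Ω → ℝ^N be twice continuously differentiable with u(x) ≠ 0 for every x ∈ Ω, satisfying the Ginzburg–Landau equation −Δu = ε^{-2}(1 − |u|²) u on Ω. Then v := u/|u| satisfies, at every point of Ω, −Δv = |∇v|² v + 2 Σ_{i=1}^{n} (∂_i ln|u|) (∂_i v). -/

import Mathlib

open MeasureTheory RealInnerProductSpace Topology

section Aux

variable {G F : Type*} [NormedAddCommGroup G] [NormedSpace ℝ G]
  [NormedAddCommGroup F] [InnerProductSpace ℝ F]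
variable {u : G → F} {U' : G →L[ℝ] F} {y : G}

lemma aux_norm (hu : HasFDerivAt u U' y) (h0 : u y ≠ 0) :
    ∃ R : G →L[ℝ] ℝ, HasFDerivAt (fun z => ‖u z‖) R y ∧
      ∀ m, R m = ⟪u y, U' m⟫ / ‖u y‖ := by
  have hn0 : ‖u y‖ ≠ 0 := norm_ne_zero_iff.2 h0
  have hq : HasFDerivAt (fun z => ⟪u z, u z⟫)
      ((fderivInnerCLM ℝ (u y, u y)).comp (U'.prod U')) y := hu.inner ℝ hu
  have hq0 : ⟪u y, u y⟫ ≠ 0 := by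
    rw [real_inner_self_eq_norm_sq]; exact pow_ne_zero 2 hn0
  have hs := hq.sqrt hq0
  have hfun : (fun z => Real.sqrt ⟪u z, u z⟫) = fun z => ‖u z‖ := by
    funext z; rw [real_inner_self_eq_norm_sq, Real.sqrt_sq (norm_nonneg _)]
  rw [hfun] at hs
  have h1 : Real.sqrt ⟪u y, u y⟫ = ‖u y‖ := by
    rw [real_inner_self_eq_norm_sq, Real.sqrt_sq (norm_nonneg _)]
  refine ⟨_, hs, fun m => ?_⟩
  simp only [ContinuousLinearMap.smul_apply, ContinuousLinearMap.comp_apply,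
    ContinuousLinearMap.prod_apply, fderivInnerCLM_apply, smul_eq_mul, h1]
  rw [real_inner_comm (U' m) (u y)]
  field_simp
  ring

lemma aux_inv_norm (hu : HasFDerivAt u U' y) (h0 : u y ≠ 0) :
    ∃ R : G →L[ℝ] ℝ, (HasFDerivAt (fun z => ‖u z‖) R y ∧
      HasFDerivAt (fun z => ‖u z‖⁻¹) ((-(‖u y‖ ^ 2)⁻¹) • R) y) ∧
      ∀ m, R m = ⟪u y, U' m⟫ / ‖u y‖ := by
  obtain ⟨R, hR, hRe⟩ := aux_norm hu h0
  have hn0 : ‖u y‖ ≠ 0 := norm_ne_zero_iff.2 h0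
  refine ⟨R, ⟨hR, ?_⟩, hRe⟩
  exact (hasDerivAt_inv hn0).comp_hasFDerivAt y hR

lemma aux_v (hu : HasFDerivAt u U' y) (h0 : u y ≠ 0) :
    ∃ D : G →L[ℝ] F, HasFDerivAt (fun z => ‖u z‖⁻¹ • u z) D y ∧
      ∀ m, D m = (-(⟪u y, U' m⟫ * (‖u y‖ ^ 3)⁻¹)) • u y + ‖u y‖⁻¹ • U' m := by
  obtain ⟨R, ⟨hR, hinv⟩, hRe⟩ := aux_inv_norm hu h0
  have hn0 : ‖u y‖ ≠ 0 := norm_ne_zero_iff.2 h0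
  refine ⟨_, hinv.smul hu, fun m => ?_⟩
  simp only [ContinuousLinearMap.add_apply, ContinuousLinearMap.smul_apply,
    ContinuousLinearMap.smulRight_apply, hRe, smul_eq_mul]
  rw [add_comm]
  congr 1
  have : -(‖u y‖ ^ 2)⁻¹ * (⟪u y, U' m⟫ / ‖u y‖) = -(⟪u y, U' m⟫ * (‖u y‖ ^ 3)⁻¹) := by
    have h3 : (‖u y‖ ^ 3)⁻¹ = (‖u y‖ ^ 2)⁻¹ * ‖u y‖⁻¹ := by
      rw [← mul_inv, ← pow_succ]
    rw [neg_mul, neg_inj, h3, div_eq_mul_inv]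
    ring
  rw [this]

lemma aux_log (hu : HasFDerivAt u U' y) (h0 : u y ≠ 0) :
    ∃ L : G →L[ℝ] ℝ, HasFDerivAt (fun z => Real.log ‖u z‖) L y ∧
      ∀ m, L m = ⟪u y, U' m⟫ / ‖u y‖ ^ 2 := by
  obtain ⟨R, hR, hRe⟩ := aux_norm hu h0
  have hn0 : ‖u y‖ ≠ 0 := norm_ne_zero_iff.2 h0
  refine ⟨_, hR.log hn0, fun m => ?_⟩
  simp only [ContinuousLinearMap.smul_apply, hRe, smul_eq_mul]
  have h3 : (‖u y‖ ^ 2)⁻¹ = ‖u y‖⁻¹ * ‖u y‖⁻¹ := by rw [← mul_inv, ← pow_two]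
  rw [div_eq_mul_inv, div_eq_mul_inv, h3]
  ring

end Aux

/-- Partial derivative of `f` along the `i`-th standard coordinate direction. -/
noncomputable def pd {n : ℕ} {F : Type*} [NormedAddCommGroup F] [NormedSpace ℝ F]
    (f : EuclideanSpace ℝ (Fin n) → F) (i : Fin n) (x : EuclideanSpace ℝ (Fin n)) : F :=
  fderiv ℝ f x (EuclideanSpace.single i 1)

/-- Componentwise Laplacian `Δf = Σ_i ∂_i ∂_i f`. -/
noncomputable def lap {n : ℕ} {F : Type*} [NormedAddCommGroup F] [NormedSpace ℝ F]
    (f : EuclideanSpace ℝ (Fin n) → F) (x : EuclideanSpace ℝ (Fin n)) : F :=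
  ∑ i, pd (pd f i) i x

/-- Phase equation (Euclidean version): if `u` is a `C²` nonvanishing solution of the
Ginzburg–Landau equation `−Δu = ε⁻²(1−|u|²)u` on an open set `Ω`, then `v = u/|u|`
satisfies `−Δv = |∇v|² v + 2 Σ_i (∂_i ln|u|) ∂_i v` on `Ω`. -/
theorem phase_equation {n N : ℕ} (Ω : Set (EuclideanSpace ℝ (Fin n))) (hΩ : IsOpen Ω)
    (ε : ℝ) (hε : 0 < ε)
    (u : EuclideanSpace ℝ (Fin n) → EuclideanSpace ℝ (Fin N))
    (hu : ContDiffOn ℝ 2 u Ω)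
    (hne : ∀ x ∈ Ω, u x ≠ 0)
    (hGL : ∀ x ∈ Ω, -lap u x = ((1 - ‖u x‖ ^ 2) / ε ^ 2) • u x) :
    ∀ x ∈ Ω,
      -lap (fun y => ‖u y‖⁻¹ • u y) x =
        (∑ i, ‖pd (fun y => ‖u y‖⁻¹ • u y) i x‖ ^ 2) • (‖u x‖⁻¹ • u x) +
        (2 : ℝ) • ∑ i,
          (pd (fun y => Real.log ‖u y‖) i x) • pd (fun y => ‖u y‖⁻¹ • u y) i x := by
  intro x hx
  have hΩx : Ω ∈ 𝓝 x := hΩ.mem_nhds hx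
  have hCD : ∀ y ∈ Ω, ContDiffAt ℝ 2 u y := fun y hy => (hu y hy).contDiffAt (hΩ.mem_nhds hy)
  have hdiff : ∀ y ∈ Ω, DifferentiableAt ℝ u y := fun y hy =>
    (hCD y hy).differentiableAt (by norm_num)
  have hn0 : ‖u x‖ ≠ 0 := norm_ne_zero_iff.2 (hne x hx)
  -- first derivative of v on Ω
  have hpdv : ∀ y ∈ Ω, ∀ j : Fin n, pd (fun z => ‖u z‖⁻¹ • u z) j y =
      (-(⟪u y, pd u j y⟫ * (‖u y‖ ^ 3)⁻¹)) • u y + ‖u y‖⁻¹ • pd u j y := by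
    intro y hy j
    obtain ⟨D, hD, hDe⟩ := aux_v (hdiff y hy).hasFDerivAt (hne y hy)
    show fderiv ℝ (fun z => ‖u z‖⁻¹ • u z) y (EuclideanSpace.single j 1) = _
    rw [hD.fderiv]
    exact hDe _
  -- second derivative of v at x
  have key : ∀ j : Fin n, pd (pd (fun z => ‖u z‖⁻¹ • u z) j) j x =
      (3 * ⟪u x, pd u j x⟫ ^ 2 * (‖u x‖ ^ 5)⁻¹
        - (⟪pd u j x, pd u j x⟫ + ⟪u x, pd (pd u j) j x⟫) * (‖u x‖ ^ 3)⁻¹) • u x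
      + (-(2 * ⟪u x, pd u j x⟫ * (‖u x‖ ^ 3)⁻¹)) • pd u j x
      + ‖u x‖⁻¹ • pd (pd u j) j x := by
    intro j
    have hux : HasFDerivAt u (fderiv ℝ u x) x := (hdiff x hx).hasFDerivAt
    have hwD : DifferentiableAt ℝ (pd u j) x := by
      have h1 : ContDiffAt ℝ 1 (fderiv ℝ u) x := (hCD x hx).fderiv_right (by norm_num)
      exact (h1.clm_apply contDiffAt_const).differentiableAt (by norm_num)
    have hwx : HasFDerivAt (pd u j) (fderiv ℝ (pd u j) x) x := hwD.hasFDerivAt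
    obtain ⟨R, ⟨hR, hinv⟩, hRe⟩ := aux_inv_norm hux (hne x hx)
    have hiw : HasFDerivAt (fun z => ⟪u z, pd u j z⟫)
        ((fderivInnerCLM ℝ (u x, pd u j x)).comp
          ((fderiv ℝ u x).prod (fderiv ℝ (pd u j) x))) x := hux.inner ℝ hwx
    have hpow : HasFDerivAt (fun z => (‖u z‖ ^ 3)⁻¹)
        ((-((‖u x‖ ^ 3) ^ 2)⁻¹ * (3 * ‖u x‖ ^ 2)) • R) x := by
      have h4 := (hasDerivAt_pow 3 (‖u x‖)).inv (pow_ne_zero 3 hn0)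
      have h5 : HasDerivAt (fun t : ℝ => (t ^ 3)⁻¹)
          (-((‖u x‖ ^ 3) ^ 2)⁻¹ * (3 * ‖u x‖ ^ 2)) ‖u x‖ := by
        refine h4.congr_deriv ?_
        push_cast
        field_simp
      have h6 := h5.comp_hasFDerivAt x hR
      exact h6
    have hc : HasFDerivAt (fun z => -(⟪u z, pd u j z⟫ * (‖u z‖ ^ 3)⁻¹)) _ x :=
      (hiw.mul hpow).neg
    have hP : HasFDerivAt
        (fun z => (-(⟪u z, pd u j z⟫ * (‖u z‖ ^ 3)⁻¹)) • u z + ‖u z‖⁻¹ • pd u j z) _ x :=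
      (hc.smul hux).add (hinv.smul hwx)
    have hEq : pd (fun z => ‖u z‖⁻¹ • u z) j =ᶠ[𝓝 x]
        fun z => (-(⟪u z, pd u j z⟫ * (‖u z‖ ^ 3)⁻¹)) • u z + ‖u z‖⁻¹ • pd u j z := by
      filter_upwards [hΩx] with z hz
      exact hpdv z hz j
    show fderiv ℝ (pd (fun z => ‖u z‖⁻¹ • u z) j) x (EuclideanSpace.single j 1) = _
    rw [hEq.fderiv_eq, hP.fderiv]
    simp only [ContinuousLinearMap.add_apply, ContinuousLinearMap.smul_apply,
      ContinuousLinearMap.smulRight_apply, ContinuousLinearMap.comp_apply,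
      ContinuousLinearMap.prod_apply, ContinuousLinearMap.neg_apply,
      fderivInnerCLM_apply, hRe, smul_eq_mul]
    have e1 : fderiv ℝ u x (EuclideanSpace.single j 1) = pd u j x := rfl
    have e2 : fderiv ℝ (pd u j) x (EuclideanSpace.single j 1) = pd (pd u j) j x := rfl
    rw [e1, e2, real_inner_comm (pd u j x) (u x)]
    match_scalars
    · field_simp
      ring
    · field_simp
      ring
    · field_simp
  -- norm of first derivative
  have hnormsq : ∀ j : Fin n, ‖pd (fun z => ‖u z‖⁻¹ • u z) j x‖ ^ 2 =
      ⟪pd u j x, pd u j x⟫ * (‖u x‖ ^ 2)⁻¹ - ⟪u x, pd u j x⟫ ^ 2 * (‖u x‖ ^ 4)⁻¹ := by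
    intro j
    rw [hpdv x hx j, ← real_inner_self_eq_norm_sq, inner_add_add_self]
    simp only [real_inner_smul_left, real_inner_smul_right]
    rw [real_inner_comm (pd u j x) (u x), real_inner_self_eq_norm_sq (u x)]
    field_simp
    ring
  -- derivative of the log of the modulus
  have hlogpd : ∀ j : Fin n, pd (fun z => Real.log ‖u z‖) j x
      = ⟪u x, pd u j x⟫ / ‖u x‖ ^ 2 := by
    intro j
    obtain ⟨L, hL, hLe⟩ := aux_log (hdiff x hx).hasFDerivAt (hne x hx)
    show fderiv ℝ (fun z => Real.log ‖u z‖) x (EuclideanSpace.single j 1) = _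
    rw [hL.fderiv]
    exact hLe _
  -- the Ginzburg-Landau equation at x
  have hGLx : lap u x = -(((1 - ‖u x‖ ^ 2) / ε ^ 2) • u x) := by
    have h := hGL x hx
    rw [neg_eq_iff_eq_neg] at h
    exact h
  have hdsum : ∑ j : Fin n, ⟪u x, pd (pd u j) j x⟫
      = -((1 - ‖u x‖ ^ 2) / ε ^ 2 * ‖u x‖ ^ 2) := by
    have h1 : (⟪u x, lap u x⟫ : ℝ) = ∑ j : Fin n, ⟪u x, pd (pd u j) j x⟫ :=
      inner_sum _ _ _
    rw [hGLx] at h1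
    rw [← h1, inner_neg_right, real_inner_smul_right, real_inner_self_eq_norm_sq]
  -- per-index rearrangement
  have claim : ∀ j : Fin n, -(pd (pd (fun z => ‖u z‖⁻¹ • u z) j) j x) =
      (⟪u x, pd (pd u j) j x⟫ * (‖u x‖ ^ 3)⁻¹) • u x
      + (‖pd (fun z => ‖u z‖⁻¹ • u z) j x‖ ^ 2) • (‖u x‖⁻¹ • u x)
      + (2 : ℝ) • ((pd (fun z => Real.log ‖u z‖) j x) • pd (fun z => ‖u z‖⁻¹ • u z) j x)
      - ‖u x‖⁻¹ • pd (pd u j) j x := by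
    intro j
    rw [key j, hnormsq j, hlogpd j, hpdv x hx j]
    match_scalars
    · field_simp
      ring
    · field_simp
    · field_simp
  -- assemble
  have hlapv : lap (fun z => ‖u z‖⁻¹ • u z) x
      = ∑ j : Fin n, pd (pd (fun z => ‖u z‖⁻¹ • u z) j) j x := rfl
  rw [hlapv, ← Finset.sum_neg_distrib]
  rw [Finset.sum_congr rfl fun j _ => claim j]
  rw [Finset.sum_sub_distrib, Finset.sum_add_distrib, Finset.sum_add_distrib]
  rw [← Finset.sum_smul, ← Finset.sum_mul, hdsum]
  rw [← Finset.sum_smul, ← Finset.smul_sum, ← Finset.smul_sum]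
  have hsl : ∑ j : Fin n, pd (pd u j) j x = lap u x := rfl
  rw [hsl, hGLx]
  match_scalars <;> field_simp <;> ring
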